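/- (Inverse inequality for IFE functions, Lemma 5.7.) For every ϱ > 0 and β^+, β^- > 0 there exists a constant C, depending only on β^+, β^-, and ϱ, such that for every ϱ-shape-regular simplex T ⊂ ℝ^N (N ∈ {2,3}), every cutting hyperplane H for which T_h^+ and T_h^- have positive measure, and every φ ∈ S_h(T): ∫_T |∇_h φ|² dx ≤ C² h_T^{-2} ∫_T φ² dx, where ∇_h φ denotes the piecewise constant broken gradient equal to ∇φ^± on T_h^±. -/

import Mathlib

open MeasureTheory Metric Set
open scoped RealInnerProductSpace

noncomputable section

/-- Euclidean space `ℝ^N`. -/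
abbrev Euc (N : ℕ) := EuclideanSpace ℝ (Fin N)

/-- Evaluation of the affine function with gradient `p.1` and constant `p.2`. -/
noncomputable def affEval {N : ℕ} (p : Euc N × ℝ) (x : Euc N) : ℝ := ⟪p.1, x⟫ + p.2

/-- The function equal to `fp` on the positive side of the hyperplane through `x₀`
with normal `nv`, and to `fm` elsewhere. -/
noncomputable def pwFun {N : ℕ} (x₀ nv : Euc N) (fp fm : Euc N → ℝ) (x : Euc N) : ℝ :=
  if 0 < ⟪x - x₀, nv⟫ then fp x else fm x

/-- On any ball there is a sub-ball of quarter radius on which an affine function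
is pointwise at least `s/2 * ‖a‖` in absolute value. -/
lemma subball_aff {N : ℕ} (c : Euc N) (s : ℝ) (hs : 0 < s) (a : Euc N) (b : ℝ) :
    ∃ c' : Euc N, closedBall c' (s/4) ⊆ closedBall c s ∧
      ∀ x ∈ closedBall c' (s/4), (s/2 * ‖a‖)^2 ≤ (⟪a,x⟫ + b)^2 := by
  set u : Euc N := ‖a‖⁻¹ • a with hu_def
  have hau : ⟪a, u⟫ = ‖a‖ := by
    rcases eq_or_ne a 0 with h | h
    · simp [hu_def, h]
    · rw [hu_def, real_inner_smul_right, real_inner_self_eq_norm_sq, sq,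
        inv_mul_cancel_left₀ (norm_ne_zero_iff.mpr h)]
  have hnu : ‖u‖ ≤ 1 := by
    rcases eq_or_ne a 0 with h | h
    · simp [hu_def, h]
    · rw [hu_def, norm_smul, norm_inv, norm_norm,
        inv_mul_cancel₀ (norm_ne_zero_iff.mpr h)]
  have hCS : ∀ (c' : Euc N), ∀ x ∈ closedBall c' (s/4), |⟪a, x - c'⟫| ≤ s/4 * ‖a‖ := by
    intro c' x hx
    calc |⟪a, x - c'⟫| ≤ ‖a‖ * ‖x - c'‖ := abs_real_inner_le_norm a (x - c')
      _ ≤ ‖a‖ * (s/4) := by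
          have : ‖x - c'‖ ≤ s/4 := by
            rw [← dist_eq_norm]; exact mem_closedBall.mp hx
          exact mul_le_mul_of_nonneg_left this (norm_nonneg a)
      _ = s/4 * ‖a‖ := by ring
  rcases le_or_gt 0 (⟪a, c⟫ + b) with hk | hk
  · refine ⟨c + (3*s/4) • u, ?_, ?_⟩
    · intro x hx
      rw [mem_closedBall] at hx ⊢
      have h1 : dist (c + (3*s/4) • u) c ≤ 3*s/4 := by
        rw [dist_eq_norm, add_sub_cancel_left, norm_smul]
        calc |3*s/4| * ‖u‖ ≤ |3*s/4| * 1 := by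
              exact mul_le_mul_of_nonneg_left hnu (abs_nonneg _)
          _ = 3*s/4 := by rw [mul_one, abs_of_nonneg (by linarith)]
      calc dist x c ≤ dist x (c + (3*s/4) • u) + dist (c + (3*s/4) • u) c :=
            dist_triangle _ _ _
        _ ≤ s/4 + 3*s/4 := add_le_add hx h1
        _ = s := by ring
    · intro x hx
      have h2 := hCS _ x hx
      have h3 : ⟪a, x⟫ + b = ⟪a, x - (c + (3*s/4) • u)⟫ + 3*s/4 * ‖a‖ + (⟪a, c⟫ + b) := by
        rw [inner_sub_right, inner_add_right, real_inner_smul_right, hau]; ring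
      have h4 : s/2 * ‖a‖ ≤ ⟪a, x⟫ + b := by
        have := abs_le.mp h2
        rw [h3]; nlinarith [this.1]
      exact pow_le_pow_left₀ (by positivity) h4 2
  · refine ⟨c - (3*s/4) • u, ?_, ?_⟩
    · intro x hx
      rw [mem_closedBall] at hx ⊢
      have h1 : dist (c - (3*s/4) • u) c ≤ 3*s/4 := by
        rw [dist_eq_norm, sub_sub_cancel_left, norm_neg, norm_smul]
        calc |3*s/4| * ‖u‖ ≤ |3*s/4| * 1 := by
              exact mul_le_mul_of_nonneg_left hnu (abs_nonneg _)
          _ = 3*s/4 := by rw [mul_one, abs_of_nonneg (by linarith)]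
      calc dist x c ≤ dist x (c - (3*s/4) • u) + dist (c - (3*s/4) • u) c :=
            dist_triangle _ _ _
        _ ≤ s/4 + 3*s/4 := add_le_add hx h1
        _ = s := by ring
    · intro x hx
      have h2 := hCS _ x hx
      have h3 : ⟪a, x⟫ + b = ⟪a, x - (c - (3*s/4) • u)⟫ - 3*s/4 * ‖a‖ + (⟪a, c⟫ + b) := by
        rw [inner_sub_right, inner_sub_right, real_inner_smul_right, hau]; ring
      have h4 : ⟪a, x⟫ + b ≤ -(s/2 * ‖a‖) := by
        have := abs_le.mp h2
        rw [h3]; nlinarith [this.2]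
      calc (s/2 * ‖a‖)^2 ≤ (-(⟪a,x⟫ + b))^2 :=
            pow_le_pow_left₀ (by positivity) (by linarith) 2
        _ = (⟪a,x⟫ + b)^2 := by ring

lemma scalar_ineq (K ϱ h r : ℝ) (n : ℕ) (hn : n ≤ 3) (hK : 1 ≤ K) (hϱ : 0 < ϱ)
    (hr : 0 < r) (hh : 0 < h) (hhr : h ≤ ϱ * r) :
    K^2 * h^n * h^2 ≤ (512*K*(1+ϱ)^3)^2 * ((r/4/2)^2 * (r/4/4)^n) := by
  have h1 : h^(n+2) ≤ ϱ^(n+2) * r^(n+2) := by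
    rw [← mul_pow]
    exact pow_le_pow_left₀ hh.le hhr _
  have h2 : ϱ^(n+2) ≤ (1+ϱ)^6 :=
    le_trans (pow_le_pow_left₀ hϱ.le (by linarith) _)
      (pow_le_pow_right₀ (by linarith) (by omega))
  have h3 : (16:ℝ)^n ≤ 4096 :=
    le_trans (pow_le_pow_right₀ (by norm_num) hn) (by norm_num)
  have hrn : (0:ℝ) < r^(n+2) := by positivity
  have key : K^2 * h^(n+2) ≤ K^2 * ((1+ϱ)^6 * r^(n+2)) := by
    calc K^2 * h^(n+2) ≤ K^2 * (ϱ^(n+2) * r^(n+2)) :=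
          mul_le_mul_of_nonneg_left h1 (by positivity)
      _ ≤ K^2 * ((1+ϱ)^6 * r^(n+2)) :=
          mul_le_mul_of_nonneg_left
            (mul_le_mul_of_nonneg_right h2 hrn.le) (by positivity)
  have hrw : (r/4/4:ℝ)^n = r^n / 16^n := by
    rw [show (r/4/4 : ℝ) = r/16 by ring, div_pow]
  have h16 : (0:ℝ) < 16^n := by positivity
  calc K^2 * h^n * h^2 = K^2 * h^(n+2) := by ring
    _ ≤ K^2 * ((1+ϱ)^6 * r^(n+2)) := key
    _ ≤ (512*K*(1+ϱ)^3)^2 * ((r/4/2)^2 * (r/4/4)^n) := by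
        rw [hrw]
        rw [show (512*K*(1+ϱ)^3)^2 * ((r/4/2)^2 * (r^n / 16^n))
            = (4096 * (K^2 * ((1+ϱ)^6 * r^(n+2)))) / 16^n by
          field_simp; ring]
        rw [le_div_iff₀ h16]
        have hnn : 0 ≤ K^2 * ((1+ϱ)^6 * r^(n+2)) := by positivity
        have h5 := mul_le_mul_of_nonneg_left h3 hnn
        linarith

/-- Core estimate: given a designated side ball on which the piecewise function agrees
with the affine function `affEval q`, and a bound on the gradient field by `K * ‖q.1‖`. -/
lemma core_est {N : ℕ} (hN : N ≤ 3) (ϱ K : ℝ) (hϱ : 0 < ϱ) (hK : 1 ≤ K)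
    (Tset : Set (Euc N)) (hTc : IsCompact Tset)
    (z : Euc N) (r : ℝ) (hr : 0 < r) (hsub : closedBall z r ⊆ Tset)
    (hdz : 0 < Metric.diam Tset) (hreg : Metric.diam Tset ≤ ϱ * r)
    (F : Euc N → ℝ) (V : Euc N → Euc N)
    (hVm : AEStronglyMeasurable (fun x => ‖V x‖^2) (volume.restrict Tset))
    (q : Euc N × ℝ)
    (c₁ : Euc N) (hc₁ : closedBall c₁ (r/4) ⊆ closedBall z r)
    (hagree : ∀ x ∈ closedBall c₁ (r/4), F x = affEval q x)
    (hVb : ∀ x ∈ Tset, ‖V x‖ ≤ K * ‖q.1‖)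
    (hFint : IntegrableOn (fun x => F x ^ 2) Tset) :
    ∫ x in Tset, ‖V x‖^2 ≤
      (512*K*(1+ϱ)^3)^2 / Metric.diam Tset ^ 2 * ∫ x in Tset, F x ^ 2 := by
  have hTm : MeasurableSet Tset := hTc.isClosed.measurableSet
  have hTvol : volume Tset < ⊤ := hTc.measure_lt_top
  set A := ‖q.1‖ with hA
  set h := Metric.diam Tset with hh
  -- unit ball volume
  set V1 := (volume (ball (0 : Euc N) 1)).toReal with hV1
  have hV1pos : 0 < V1 :=
    ENNReal.toReal_pos (ne_of_gt (measure_ball_pos volume 0 one_pos))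
      measure_ball_lt_top.ne
  -- step 1 : LHS bound
  have hVint : IntegrableOn (fun x => ‖V x‖^2) Tset := by
    refine Integrable.mono'
      ((integrableOn_const_iff).mpr (Or.inr hTvol) : IntegrableOn (fun _ => (K*A)^2) Tset volume)
      hVm ?_
    · refine (ae_restrict_iff' hTm).mpr (Filter.Eventually.of_forall fun x hx => ?_)
      have h1 := hVb x hx
      have h2 : (0:ℝ) ≤ K * A := le_trans (norm_nonneg _) h1
      rw [Real.norm_eq_abs, abs_of_nonneg (by positivity)]
      exact (pow_le_pow_left₀ (norm_nonneg _) h1 2).trans_eq rfl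
  have step1 : ∫ x in Tset, ‖V x‖^2 ≤ (K*A)^2 * (volume Tset).toReal := by
    calc ∫ x in Tset, ‖V x‖^2 ≤ ∫ _x in Tset, (K*A)^2 := by
          refine setIntegral_mono_on hVint
            ((integrableOn_const_iff).mpr (Or.inr hTvol) : IntegrableOn (fun _ => (K*A)^2) Tset volume)
            hTm fun x hx => ?_
          exact pow_le_pow_left₀ (norm_nonneg _) (hVb x hx) 2
      _ = (volume Tset).toReal • (K*A)^2 := setIntegral_const _
      _ = (K*A)^2 * (volume Tset).toReal := by rw [smul_eq_mul]; ring
  -- step 2 : subball on which F is large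
  obtain ⟨c₂, hc₂sub, hc₂big⟩ := subball_aff c₁ (r/4) (by linarith) q.1 q.2
  have hc₂T : closedBall c₂ (r/4/4) ⊆ Tset := fun x hx => hsub (hc₁ (hc₂sub hx))
  -- step 3 : RHS lower bound
  have step3 : (r/4/2 * A)^2 * (volume (closedBall c₂ (r/4/4))).toReal ≤
      ∫ x in Tset, F x ^ 2 := by
    have hmono : ∫ x in closedBall c₂ (r/4/4), F x ^ 2 ≤ ∫ x in Tset, F x ^ 2 := by
      refine setIntegral_mono_set hFint
        (Filter.Eventually.of_forall fun x => sq_nonneg _) ?_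
      exact Filter.Eventually.of_forall fun x hx => hc₂T hx
    refine le_trans ?_ hmono
    refine setIntegral_ge_of_const_le_real measurableSet_closedBall
      measure_closedBall_lt_top.ne (fun x hx => ?_) (hFint.mono_set hc₂T)
    rw [hagree x (hc₂sub hx)]
    exact hc₂big x hx
  -- step 4 : volume comparisons
  have hTball : Tset ⊆ closedBall z h := fun x hx =>
    mem_closedBall.mpr (dist_le_diam_of_mem hTc.isBounded hx (hsub (mem_closedBall_self hr.le)))
  have hvolT : (volume Tset).toReal ≤ h^N * V1 := by
    have h1 : volume Tset ≤ volume (closedBall z h) := measure_mono hTball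
    have h2 : volume (closedBall z h) = ENNReal.ofReal (h^N) * volume (ball (0 : Euc N) 1) := by
      rw [Measure.addHaar_closedBall volume z hdz.le, finrank_euclideanSpace_fin]
    calc (volume Tset).toReal ≤ (volume (closedBall z h)).toReal :=
          ENNReal.toReal_mono (by rw [h2]; exact (ENNReal.mul_lt_top ENNReal.ofReal_lt_top
            measure_ball_lt_top).ne) h1
      _ = h^N * V1 := by
          rw [h2, ENNReal.toReal_mul, ENNReal.toReal_ofReal (by positivity)]
  have hvolB : (volume (closedBall c₂ (r/4/4))).toReal = (r/4/4)^N * V1 := by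
    rw [Measure.addHaar_closedBall volume c₂ (by linarith), finrank_euclideanSpace_fin,
      ENNReal.toReal_mul, ENNReal.toReal_ofReal (by positivity)]
  -- step 5 : combine
  have hh2 : (0:ℝ) < h^2 := by positivity
  rw [div_mul_eq_mul_div, le_div_iff₀ hh2]
  have scal := scalar_ineq K ϱ h r N hN hK hϱ hr hdz hreg
  have hA2 : (0:ℝ) ≤ A^2 * V1 := by positivity
  calc (∫ x in Tset, ‖V x‖^2) * h^2 ≤ (K*A)^2 * (volume Tset).toReal * h^2 := by
        exact mul_le_mul_of_nonneg_right step1 hh2.le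
    _ ≤ (K*A)^2 * (h^N * V1) * h^2 := by
        refine mul_le_mul_of_nonneg_right (mul_le_mul_of_nonneg_left hvolT (by positivity)) hh2.le
    _ = (K^2 * h^N * h^2) * (A^2 * V1) := by ring
    _ ≤ ((512*K*(1+ϱ)^3)^2 * ((r/4/2)^2 * (r/4/4)^N)) * (A^2 * V1) :=
        mul_le_mul_of_nonneg_right scal hA2
    _ = (512*K*(1+ϱ)^3)^2 * ((r/4/2 * A)^2 * ((r/4/4)^N * V1)) := by ring
    _ ≤ (512*K*(1+ϱ)^3)^2 * ∫ x in Tset, F x ^ 2 := by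
        refine mul_le_mul_of_nonneg_left ?_ (by positivity)
        rw [← hvolB] at *
        exact step3

set_option maxHeartbeats 2000000 in
/-- Lemma 5.7 (inverse inequality for IFE functions):
`‖∇_h φ‖_{L²(T)} ≤ C h_T^{-1} ‖φ‖_{L²(T)}` with `C = C(β⁺, β⁻, ϱ)`, stated in the
squared form `∫_T |∇_h φ|² dx ≤ C² h_T⁻² ∫_T φ² dx`. -/
theorem statement12
    (ϱ βp βm : ℝ) (hϱ : 0 < ϱ) (hβp : 0 < βp) (hβm : 0 < βm) :
    ∃ C : ℝ, 0 < C ∧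
      ∀ (N : ℕ), (N = 2 ∨ N = 3) →
      ∀ (v : Fin (N + 1) → Euc N), AffineIndependent ℝ v →
      ∀ (Tset : Set (Euc N)), Tset = convexHull ℝ (Set.range v) →
      -- shape regularity: h_T ≤ ϱ r_T
      (∃ z r, 0 < r ∧ closedBall z r ⊆ Tset ∧ Metric.diam Tset ≤ ϱ * r) →
      ∀ (nv x₀ : Euc N), ‖nv‖ = 1 →
      ∀ (Hpl : Set (Euc N)), Hpl = {x | ⟪x - x₀, nv⟫ = 0} →
      -- both pieces T_h^± of the cut simplex have positive measure
      0 < volume {x ∈ Tset | 0 < ⟪x - x₀, nv⟫} →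
      0 < volume {x ∈ Tset | ⟪x - x₀, nv⟫ < 0} →
      -- φ ∈ S_h(T), with affine pieces `affEval p` on T_h^+ and `affEval m` on T_h^-
      ∀ (p m : Euc N × ℝ),
        (∀ x ∈ Hpl, affEval p x = affEval m x) →
        βp * ⟪p.1, nv⟫ = βm * ⟪m.1, nv⟫ →
        (∫ x in Tset, ‖if 0 < ⟪x - x₀, nv⟫ then p.1 else m.1‖ ^ 2) ≤
          C ^ 2 / Metric.diam Tset ^ 2 *
            ∫ x in Tset, (pwFun x₀ nv (affEval p) (affEval m) x) ^ 2 := by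
  have hpm0 : 0 < βp/βm := div_pos hβp hβm
  have hmp0 : 0 < βm/βp := div_pos hβm hβp
  set K : ℝ := 2 + βp/βm + βm/βp with hKdef
  have hK : 1 ≤ K := by simp only [hKdef]; linarith
  refine ⟨512*K*(1+ϱ)^3, by positivity, ?_⟩
  rintro N hN v hv Tset hTeq ⟨z, r, hr, hball, hreg⟩ nv x₀ hnv Hpl hHpl hvp hvm p m hcont hflux
  have hNle : N ≤ 3 := by rcases hN with h | h <;> omega
  have hTc : IsCompact Tset := by
    rw [hTeq]; exact (Set.finite_range v).isCompact_convexHull ℝ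
  have hTm : MeasurableSet Tset := hTc.isClosed.measurableSet
  have hzT : z ∈ Tset := hball (mem_closedBall_self hr.le)
  have hz2 : z + r • nv ∈ Tset := by
    apply hball
    rw [mem_closedBall, dist_eq_norm, add_sub_cancel_left, norm_smul, hnv, mul_one,
      Real.norm_eq_abs, abs_of_nonneg hr.le]
  have hdz : 0 < Metric.diam Tset := by
    refine lt_of_lt_of_le hr ?_
    have hd := dist_le_diam_of_mem hTc.isBounded hz2 hzT
    rwa [dist_eq_norm, add_sub_cancel_left, norm_smul, hnv, mul_one,
      Real.norm_eq_abs, abs_of_nonneg hr.le] at hd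
  -- inner product facts
  have hnv2 : ⟪nv, nv⟫ = (1:ℝ) := by
    rw [real_inner_self_eq_norm_sq, hnv]; norm_num
  -- gradient relation from the interface conditions
  set t : ℝ := ⟪p.1 - m.1, nv⟫ with htdef
  have hgrad : p.1 - m.1 = t • nv := by
    have hw'nv : ⟪p.1 - m.1 - t • nv, nv⟫ = 0 := by
      rw [inner_sub_left, real_inner_smul_left, hnv2, htdef]; ring
    have h0 : x₀ ∈ Hpl := by rw [hHpl]; simp
    have h1 : x₀ + (p.1 - m.1 - t • nv) ∈ Hpl := by
      rw [hHpl]; simpa using hw'nv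
    have e0 := hcont x₀ h0
    have e1 := hcont _ h1
    simp only [affEval, inner_add_right] at e0 e1
    have hww' : ⟪p.1 - m.1, p.1 - m.1 - t • nv⟫ = 0 := by
      rw [inner_sub_left]; linarith
    have hzero : ⟪p.1 - m.1 - t • nv, p.1 - m.1 - t • nv⟫ = (0:ℝ) := by
      rw [inner_sub_left, real_inner_smul_left, hww', real_inner_comm, hw'nv]
      ring
    have hw0 : p.1 - m.1 - t • nv = 0 := by
      rwa [real_inner_self_eq_norm_sq, pow_eq_zero_iff (two_ne_zero), norm_eq_zero] at hzero
    exact sub_eq_zero.mp hw0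
  have hm1 : m.1 = p.1 - t • nv := by
    rw [← hgrad]; abel
  have hp1 : p.1 = m.1 + t • nv := by
    rw [← hgrad]; abel
  have habsp : |⟪p.1, nv⟫| ≤ ‖p.1‖ := by
    have := abs_real_inner_le_norm p.1 nv
    rwa [hnv, mul_one] at this
  have habsm : |⟪m.1, nv⟫| ≤ ‖m.1‖ := by
    have := abs_real_inner_le_norm m.1 nv
    rwa [hnv, mul_one] at this
  have htm : ⟪m.1, nv⟫ = ⟪p.1, nv⟫ - t := by
    rw [hm1, inner_sub_left, real_inner_smul_left, hnv2]; ring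
  -- bound |t| both ways using the flux condition
  have htp : βm * t = (βm - βp) * ⟪p.1, nv⟫ := by
    rw [htm] at hflux; ring_nf; ring_nf at hflux; linarith
  have htm' : βp * t = (βm - βp) * ⟪m.1, nv⟫ := by
    have : ⟪p.1, nv⟫ = ⟪m.1, nv⟫ + t := by rw [htm]; ring
    rw [this] at hflux; ring_nf; ring_nf at hflux; linarith
  have htb1 : |t| ≤ (1 + βp/βm) * ‖p.1‖ := by
    have h1 : |βm * t| = |βm - βp| * |⟪p.1, nv⟫| := by rw [htp, abs_mul]
    have h2 : |βm - βp| ≤ βm + βp := (abs_sub βm βp).trans (by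
      rw [abs_of_pos hβm, abs_of_pos hβp])
    have h3 : |βm * t| ≤ (βm + βp) * ‖p.1‖ := by
      rw [h1]
      exact mul_le_mul h2 habsp (abs_nonneg _) (by positivity)
    rw [abs_mul, abs_of_pos hβm] at h3
    have h5 : |t| ≤ ((βm + βp) * ‖p.1‖) / βm := (le_div_iff₀ hβm).mpr (by linarith)
    have h6 : ((βm + βp) * ‖p.1‖) / βm = (1 + βp/βm) * ‖p.1‖ := by
      field_simp
      try ring
      try tauto
    linarith [h5, h6.le, h6.ge]
  have htb2 : |t| ≤ (1 + βm/βp) * ‖m.1‖ := by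
    have h1 : |βp * t| = |βm - βp| * |⟪m.1, nv⟫| := by rw [htm', abs_mul]
    have h2 : |βm - βp| ≤ βm + βp := (abs_sub βm βp).trans (by
      rw [abs_of_pos hβm, abs_of_pos hβp])
    have h3 : |βp * t| ≤ (βm + βp) * ‖m.1‖ := by
      rw [h1]
      exact mul_le_mul h2 habsm (abs_nonneg _) (by positivity)
    rw [abs_mul, abs_of_pos hβp] at h3
    have h5 : |t| ≤ ((βm + βp) * ‖m.1‖) / βp := (le_div_iff₀ hβp).mpr (by linarith)
    have h6 : ((βm + βp) * ‖m.1‖) / βp = (1 + βm/βp) * ‖m.1‖ := by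
      field_simp
      try ring
      try tauto
    linarith [h5, h6.le, h6.ge]
  have hmp : ‖m.1‖ ≤ K * ‖p.1‖ := by
    calc ‖m.1‖ = ‖p.1 - t • nv‖ := by rw [hm1]
      _ ≤ ‖p.1‖ + ‖t • nv‖ := norm_sub_le _ _
      _ = ‖p.1‖ + |t| := by rw [norm_smul, hnv, mul_one, Real.norm_eq_abs]
      _ ≤ ‖p.1‖ + (1 + βp/βm) * ‖p.1‖ := by linarith
      _ = (2 + βp/βm) * ‖p.1‖ := by ring
      _ ≤ K * ‖p.1‖ := by
          refine mul_le_mul_of_nonneg_right ?_ (norm_nonneg _)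
          rw [hKdef]; linarith
  have hpm : ‖p.1‖ ≤ K * ‖m.1‖ := by
    calc ‖p.1‖ = ‖m.1 + t • nv‖ := by rw [hp1]
      _ ≤ ‖m.1‖ + ‖t • nv‖ := norm_add_le _ _
      _ = ‖m.1‖ + |t| := by rw [norm_smul, hnv, mul_one, Real.norm_eq_abs]
      _ ≤ ‖m.1‖ + (1 + βm/βp) * ‖m.1‖ := by linarith
      _ = (2 + βm/βp) * ‖m.1‖ := by ring
      _ ≤ K * ‖m.1‖ := by
          refine mul_le_mul_of_nonneg_right ?_ (norm_nonneg _)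
          rw [hKdef]; linarith
  -- measurability and integrability
  have hcontp : Continuous (affEval p) :=
    (Continuous.inner continuous_const continuous_id).add continuous_const
  have hcontm : Continuous (affEval m) :=
    (Continuous.inner continuous_const continuous_id).add continuous_const
  have hcontip : Continuous (fun x : Euc N => ⟪x - x₀, nv⟫) :=
    Continuous.inner (continuous_id.sub continuous_const) continuous_const
  have hS : MeasurableSet {x : Euc N | 0 < ⟪x - x₀, nv⟫} :=
    measurableSet_lt measurable_const hcontip.measurable
  have hFmeas : Measurable (pwFun x₀ nv (affEval p) (affEval m)) := by
    unfold pwFun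
    exact Measurable.ite hS hcontp.measurable hcontm.measurable
  have hVmeas : Measurable (fun x : Euc N => if 0 < ⟪x - x₀, nv⟫ then p.1 else m.1) :=
    Measurable.ite hS measurable_const measurable_const
  have hVm : AEStronglyMeasurable
      (fun x => ‖if 0 < ⟪x - x₀, nv⟫ then p.1 else m.1‖^2) (volume.restrict Tset) :=
    ((hVmeas.norm.pow_const 2).aestronglyMeasurable)
  have hFint : IntegrableOn (fun x => pwFun x₀ nv (affEval p) (affEval m) x ^ 2) Tset := by
    have hb : IntegrableOn (fun x => (affEval p x)^2 + (affEval m x)^2) Tset :=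
      (((hcontp.pow 2).add (hcontm.pow 2)).continuousOn).integrableOn_compact hTc
    refine Integrable.mono' hb ((hFmeas.pow_const 2).aestronglyMeasurable)
      (Filter.Eventually.of_forall fun x => ?_)
    rw [Real.norm_eq_abs, abs_of_nonneg (sq_nonneg _)]
    unfold pwFun
    split_ifs with h
    · linarith [sq_nonneg (affEval m x)]
    · linarith [sq_nonneg (affEval p x)]
  -- case split on which side of the hyperplane the incenter lies
  rcases le_or_gt 0 ⟪z - x₀, nv⟫ with hd | hd
  · -- positive side: use the affine piece `p`
    set c₁ : Euc N := z + (r/2) • nv with hc₁def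
    have hc₁sub : closedBall c₁ (r/4) ⊆ closedBall z r := by
      intro x hx
      rw [mem_closedBall] at hx ⊢
      have h1 : dist c₁ z = r/2 := by
        rw [hc₁def, dist_eq_norm, add_sub_cancel_left, norm_smul, hnv, mul_one,
          Real.norm_eq_abs, abs_of_nonneg (by linarith)]
      calc dist x z ≤ dist x c₁ + dist c₁ z := dist_triangle _ _ _
        _ ≤ r/4 + r/2 := by rw [h1]; linarith
        _ ≤ r := by linarith
    have hpos : ∀ x ∈ closedBall c₁ (r/4), 0 < ⟪x - x₀, nv⟫ := by
      intro x hx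
      have hxc : ‖x - c₁‖ ≤ r/4 := by
        rw [← dist_eq_norm]; exact mem_closedBall.mp hx
      have hsplit : ⟪x - x₀, nv⟫ = ⟪x - c₁, nv⟫ + (r/2) + ⟪z - x₀, nv⟫ := by
        have hdec : x - x₀ = (x - c₁) + ((r/2) • nv + (z - x₀)) := by
          rw [hc₁def]; abel
        rw [hdec, inner_add_left, inner_add_left, real_inner_smul_left, hnv2]
        ring
      have hCS : |⟪x - c₁, nv⟫| ≤ r/4 := by
        have := abs_real_inner_le_norm (x - c₁) nv
        rw [hnv, mul_one] at this
        linarith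
      have := abs_le.mp hCS
      rw [hsplit]; linarith
    have hagree : ∀ x ∈ closedBall c₁ (r/4),
        pwFun x₀ nv (affEval p) (affEval m) x = affEval p x := by
      intro x hx
      unfold pwFun
      rw [if_pos (hpos x hx)]
    have hVb : ∀ x ∈ Tset,
        ‖if 0 < ⟪x - x₀, nv⟫ then p.1 else m.1‖ ≤ K * ‖p.1‖ := by
      intro x _
      split_ifs with h
      · exact le_mul_of_one_le_left (norm_nonneg _) hK
      · exact hmp
    exact core_est hNle ϱ K hϱ hK Tset hTc z r hr hball hdz hreg
      (pwFun x₀ nv (affEval p) (affEval m))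
      (fun x => if 0 < ⟪x - x₀, nv⟫ then p.1 else m.1)
      hVm p c₁ hc₁sub hagree hVb hFint
  · -- negative side: use the affine piece `m`
    set c₁ : Euc N := z - (r/2) • nv with hc₁def
    have hc₁sub : closedBall c₁ (r/4) ⊆ closedBall z r := by
      intro x hx
      rw [mem_closedBall] at hx ⊢
      have h1 : dist c₁ z = r/2 := by
        rw [hc₁def, dist_eq_norm, sub_sub_cancel_left, norm_neg, norm_smul, hnv, mul_one,
          Real.norm_eq_abs, abs_of_nonneg (by linarith)]
      calc dist x z ≤ dist x c₁ + dist c₁ z := dist_triangle _ _ _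
        _ ≤ r/4 + r/2 := by rw [h1]; linarith
        _ ≤ r := by linarith
    have hneg : ∀ x ∈ closedBall c₁ (r/4), ⟪x - x₀, nv⟫ < 0 := by
      intro x hx
      have hxc : ‖x - c₁‖ ≤ r/4 := by
        rw [← dist_eq_norm]; exact mem_closedBall.mp hx
      have hsplit : ⟪x - x₀, nv⟫ = ⟪x - c₁, nv⟫ - (r/2) + ⟪z - x₀, nv⟫ := by
        have hdec : x - x₀ = (x - c₁) + ((-(r/2)) • nv + (z - x₀)) := by
          rw [hc₁def, neg_smul]; abel
        rw [hdec, inner_add_left, inner_add_left, real_inner_smul_left, hnv2]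
        ring
      have hCS : |⟪x - c₁, nv⟫| ≤ r/4 := by
        have := abs_real_inner_le_norm (x - c₁) nv
        rw [hnv, mul_one] at this
        linarith
      have := abs_le.mp hCS
      rw [hsplit]; linarith
    have hagree : ∀ x ∈ closedBall c₁ (r/4),
        pwFun x₀ nv (affEval p) (affEval m) x = affEval m x := by
      intro x hx
      unfold pwFun
      rw [if_neg (not_lt.mpr (hneg x hx).le)]
    have hVb : ∀ x ∈ Tset,
        ‖if 0 < ⟪x - x₀, nv⟫ then p.1 else m.1‖ ≤ K * ‖m.1‖ := by
      intro x _
      split_ifs with h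
      · exact hpm
      · exact le_mul_of_one_le_left (norm_nonneg _) hK
    exact core_est hNle ϱ K hϱ hK Tset hTc z r hr hball hdz hreg
      (pwFun x₀ nv (affEval p) (affEval m))
      (fun x => if 0 < ⟪x - x₀, nv⟫ then p.1 else m.1)
      hVm m c₁ hc₁sub hagree hVb hFint
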